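/- Let ℙ_n denote the set of all finite products of n×n pinching matrices. Then for every α ∈ [0,1], the matrix αI_n + (1−α)J_n belongs to the closure of ℙ_n (with respect to the standard topology on n×n real matrices), where J_n is the n×n matrix all of whose entries equal 1/n. -/

import Mathlib

open Matrix

/-- An `n × n` real matrix is a pinching matrix if for some `s < t` and `α ∈ [0,1]` its
`(s,s)` and `(t,t)` entries are `α`, its `(s,t)` and `(t,s)` entries are `1 − α`, the
remaining diagonal entries are `1`, and all other entries vanish. -/
def IsPinching {n : ℕ} (P : Matrix (Fin n) (Fin n) ℝ) : Prop :=
  ∃ s t : Fin n, s < t ∧ ∃ α ∈ Set.Icc (0 : ℝ) 1,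
    P = Matrix.of fun i j =>
      if i = s ∧ j = s then α
      else if i = t ∧ j = t then α
      else if i = s ∧ j = t then 1 - α
      else if i = t ∧ j = s then 1 - α
      else if i = j then 1 else 0

/-- `ℙ_n`, the set of all finite products of `n × n` pinching matrices. -/
def PinchingProducts (n : ℕ) : Set (Matrix (Fin n) (Fin n) ℝ) :=
  {M | ∃ Ps : List (Matrix (Fin n) (Fin n) ℝ),
    (∀ P ∈ Ps, IsPinching P) ∧ M = Ps.prod}

namespace StmtAux

open Finset

variable {n : ℕ}

/-- The outer product `(e_s - e_t)(e_s - e_t)ᵀ`. -/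
def Amat (s t : Fin n) : Matrix (Fin n) (Fin n) ℝ :=
  Matrix.of fun i j => ((if i = s then (1:ℝ) else 0) - (if i = t then 1 else 0)) *
    ((if j = s then (1:ℝ) else 0) - (if j = t then 1 else 0))

noncomputable def Jmat (n : ℕ) : Matrix (Fin n) (Fin n) ℝ := Matrix.of fun _ _ => (1 / n : ℝ)

lemma Amat_symm (s t : Fin n) : Amat s t = Amat t s := by
  ext i j
  simp only [Amat, Matrix.of_apply]
  ring

lemma isPinching_pinch (s t : Fin n) (hst : s < t) (c : ℝ) (hc : c ∈ Set.Icc (0:ℝ) 1) :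
    IsPinching (1 - c • Amat s t) := by
  refine ⟨s, t, hst, 1 - c, ⟨by linarith [hc.2], by linarith [hc.1]⟩, ?_⟩
  have hne : s ≠ t := ne_of_lt hst
  ext i j
  simp only [Matrix.sub_apply, Matrix.smul_apply, Matrix.one_apply, Amat,
    Matrix.of_apply, smul_eq_mul]
  by_cases his : i = s <;> by_cases hit : i = t <;> by_cases hjs : j = s <;>
    by_cases hjt : j = t <;> simp_all

def DS (M : Matrix (Fin n) (Fin n) ℝ) : Prop :=
  (∀ i j, 0 ≤ M i j) ∧ (∀ i, ∑ j, M i j = 1) ∧ (∀ j, ∑ i, M i j = 1)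

def Bnd (M : Matrix (Fin n) (Fin n) ℝ) (b : ℝ) : Prop := ∀ i j, |M i j| ≤ b

lemma DS_one : DS (1 : Matrix (Fin n) (Fin n) ℝ) := by
  refine ⟨fun i j => ?_, fun i => ?_, fun j => ?_⟩ <;>
    simp [Matrix.one_apply]
  · positivity

lemma DS_mul {M N : Matrix (Fin n) (Fin n) ℝ} (hM : DS M) (hN : DS N) : DS (M * N) := by
  obtain ⟨hM0, hMr, hMc⟩ := hM
  obtain ⟨hN0, hNr, hNc⟩ := hN
  refine ⟨fun i j => ?_, fun i => ?_, fun j => ?_⟩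
  · rw [Matrix.mul_apply]
    exact Finset.sum_nonneg fun k _ => mul_nonneg (hM0 i k) (hN0 k j)
  · simp only [Matrix.mul_apply]
    rw [Finset.sum_comm]
    calc ∑ k, ∑ j, M i k * N k j = ∑ k, M i k * ∑ j, N k j := by
          simp [Finset.mul_sum]
      _ = 1 := by simp [hNr, hMr]
  · simp only [Matrix.mul_apply]
    calc ∑ i, ∑ k, M i k * N k j = ∑ k, (∑ i, M i k) * N k j := by
          rw [Finset.sum_comm]; simp [Finset.sum_mul]
      _ = 1 := by simp [hMc, hNc]

lemma DS_list_prod {l : List (Matrix (Fin n) (Fin n) ℝ)} (h : ∀ M ∈ l, DS M) :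
    DS l.prod := by
  induction l with
  | nil => simpa using DS_one
  | cons a l ih =>
      rw [List.prod_cons]
      exact DS_mul (h a (by simp)) (ih fun M hM => h M (by simp [hM]))

lemma DS_entry_le_one {M : Matrix (Fin n) (Fin n) ℝ} (h : DS M) : ∀ i j, M i j ≤ 1 := by
  intro i j
  obtain ⟨h0, hr, _⟩ := h
  calc M i j ≤ ∑ k, M i k := Finset.single_le_sum (fun k _ => h0 i k) (Finset.mem_univ j)
    _ = 1 := hr i

lemma Bnd_sub_one {M : Matrix (Fin n) (Fin n) ℝ} (h : DS M) :
    Bnd (M - 1) 1 := by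
  intro i j
  rw [Matrix.sub_apply, abs_le]
  constructor
  · nlinarith [DS_entry_le_one DS_one i j, (DS_one (n := n)).1 i j, h.1 i j]
  · have := DS_entry_le_one h i j
    have := (DS_one (n := n)).1 i j
    linarith

lemma Bnd_mul_DS {Z y : Matrix (Fin n) (Fin n) ℝ} {b : ℝ} (hZ : Bnd Z b) (hy : DS y) :
    Bnd (Z * y) b := by
  intro i j
  rw [Matrix.mul_apply]
  calc |∑ k, Z i k * y k j| ≤ ∑ k, |Z i k * y k j| := Finset.abs_sum_le_sum_abs _ _
    _ ≤ ∑ k, b * y k j := by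
        refine Finset.sum_le_sum fun k _ => ?_
        rw [abs_mul, abs_of_nonneg (hy.1 k j)]
        exact mul_le_mul_of_nonneg_right (hZ i k) (hy.1 k j)
    _ = b := by rw [← Finset.mul_sum, hy.2.2 j, mul_one]

lemma DS_mul_Bnd {Z x : Matrix (Fin n) (Fin n) ℝ} {b : ℝ} (hx : DS x) (hZ : Bnd Z b) :
    Bnd (x * Z) b := by
  intro i j
  rw [Matrix.mul_apply]
  calc |∑ k, x i k * Z k j| ≤ ∑ k, |x i k * Z k j| := Finset.abs_sum_le_sum_abs _ _
    _ ≤ ∑ k, x i k * b := by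
        refine Finset.sum_le_sum fun k _ => ?_
        rw [abs_mul, abs_of_nonneg (hx.1 i k)]
        exact mul_le_mul_of_nonneg_left (hZ k j) (hx.1 i k)
    _ = b := by rw [← Finset.sum_mul, hx.2.1 i, one_mul]

lemma Bnd_add {Z W : Matrix (Fin n) (Fin n) ℝ} {b c : ℝ} (hZ : Bnd Z b) (hW : Bnd W c) :
    Bnd (Z + W) (b + c) := fun i j => by
  calc |(Z + W) i j| = |Z i j + W i j| := by rw [Matrix.add_apply]
    _ ≤ |Z i j| + |W i j| := abs_add_le _ _
    _ ≤ b + c := add_le_add (hZ i j) (hW i j)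

lemma Bnd_pow_sub_pow {x y : Matrix (Fin n) (Fin n) ℝ} {b : ℝ} (hx : DS x) (hy : DS y)
    (h : Bnd (x - y) b) : ∀ N : ℕ, Bnd (x ^ N - y ^ N) (N * b) := by
  intro N
  induction N with
  | zero =>
      simp only [pow_zero, sub_self, Nat.cast_zero, zero_mul]
      exact fun i j => by simp
  | succ N ih =>
      have key : x ^ (N+1) - y ^ (N+1) = x ^ N * (x - y) + (x ^ N - y ^ N) * y := by
        rw [pow_succ, pow_succ, mul_sub, sub_mul]
        abel
      rw [key]
      have h1 : Bnd (x ^ N * (x - y)) b := DS_mul_Bnd (by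
        have : DS (x ^ N) := by
          have := DS_list_prod (l := List.replicate N x) (fun M hM => by
            rw [List.eq_of_mem_replicate hM]; exact hx)
          simpa using this
        exact this) h
      have h2 : Bnd ((x ^ N - y ^ N) * y) (N * b) := Bnd_mul_DS ih hy
      have := Bnd_add h2 h1
      rw [add_comm (x ^ N * (x - y))]
      convert this using 1
      push_cast
      ring

lemma Bnd_Amat (s t : Fin n) : Bnd (Amat s t) 1 := by
  intro i j
  simp only [Amat, Matrix.of_apply, abs_mul]
  calc |(if i = s then (1:ℝ) else 0) - if i = t then 1 else 0| *
        |(if j = s then (1:ℝ) else 0) - if j = t then 1 else 0| ≤ 1 * 1 := by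
        apply mul_le_mul (by split_ifs <;> simp) (by split_ifs <;> simp)
          (abs_nonneg _) zero_le_one
    _ = 1 := one_mul 1

lemma Bnd_Amat_mul {Z : Matrix (Fin n) (Fin n) ℝ} {b : ℝ} (s t : Fin n)
    (hZ : Bnd Z b) : Bnd (Amat s t * Z) (2 * b) := by
  intro i j
  have key : (Amat s t * Z) i j
      = ((if i = s then (1:ℝ) else 0) - (if i = t then 1 else 0)) * (Z s j - Z t j) := by
    rw [Matrix.mul_apply]
    simp only [Amat, Matrix.of_apply]
    calc ∑ x, ((if i = s then (1:ℝ) else 0) - (if i = t then 1 else 0)) *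
          ((if x = s then (1:ℝ) else 0) - (if x = t then 1 else 0)) * Z x j
        = ((if i = s then (1:ℝ) else 0) - (if i = t then 1 else 0)) *
          ∑ x, ((if x = s then (1:ℝ) else 0) - (if x = t then 1 else 0)) * Z x j := by
          rw [Finset.mul_sum]; exact Finset.sum_congr rfl fun x _ => by ring
      _ = ((if i = s then (1:ℝ) else 0) - (if i = t then 1 else 0)) * (Z s j - Z t j) := by
          congr 1
          simp [sub_mul, Finset.sum_sub_distrib, ite_mul]
  rw [key, abs_mul]
  have h1 : |(if i = s then (1:ℝ) else 0) - if i = t then 1 else 0| ≤ 1 := by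
    split_ifs <;> simp
  have h2 : |Z s j - Z t j| ≤ 2 * b := by
    calc |Z s j - Z t j| ≤ |Z s j| + |Z t j| := abs_sub _ _
      _ ≤ b + b := add_le_add (hZ s j) (hZ t j)
      _ = 2 * b := by ring
  calc |(if i = s then (1:ℝ) else 0) - if i = t then 1 else 0| * |Z s j - Z t j|
      ≤ 1 * (2 * b) := mul_le_mul h1 h2 (abs_nonneg _) zero_le_one
    _ = 2 * b := one_mul _

lemma Bnd_mono {Z : Matrix (Fin n) (Fin n) ℝ} {b b' : ℝ} (h : Bnd Z b) (hb : b ≤ b') :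
    Bnd Z b' := fun i j => le_trans (h i j) hb

lemma Bnd_sub {Z W : Matrix (Fin n) (Fin n) ℝ} {b c : ℝ} (hZ : Bnd Z b) (hW : Bnd W c) :
    Bnd (Z - W) (b + c) := fun i j => by
  calc |(Z - W) i j| = |Z i j - W i j| := by rw [Matrix.sub_apply]
    _ ≤ |Z i j| + |W i j| := abs_sub _ _
    _ ≤ b + c := add_le_add (hZ i j) (hW i j)

lemma Bnd_smul {Z : Matrix (Fin n) (Fin n) ℝ} {b c : ℝ} (hc : 0 ≤ c) (hZ : Bnd Z b) :
    Bnd (c • Z) (c * b) := fun i j => by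
  rw [Matrix.smul_apply, smul_eq_mul, abs_mul, abs_of_nonneg hc]
  exact mul_le_mul_of_nonneg_left (hZ i j) hc

lemma Bnd_prod_sub_one {c : ℝ} (hc0 : 0 ≤ c) (hc1 : c ≤ 1) :
    ∀ l : List (Fin n × Fin n),
      Bnd ((l.map fun p => 1 - c • Amat p.1 p.2).prod - 1) (c * 4 ^ l.length) := by
  intro l
  induction l with
  | nil => intro i j; simp [hc0]
  | cons a l ih =>
      set G := (l.map fun p => 1 - c • Amat p.1 p.2).prod with hG
      set A := Amat a.1 a.2 with hA
      have key : ((a :: l).map fun p => 1 - c • Amat p.1 p.2).prod - 1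
          = (G - 1) - c • (A * (G - 1)) - c • A := by
        simp only [List.map_cons, List.prod_cons, ← hG, ← hA]
        rw [sub_mul, one_mul, Matrix.smul_mul, mul_sub, mul_one, smul_sub]
        abel
      rw [key]
      have h1 : Bnd (G - 1) (c * 4 ^ l.length) := ih
      have h2 : Bnd (c • (A * (G - 1))) (c * (2 * (c * 4 ^ l.length))) :=
        Bnd_smul hc0 (Bnd_Amat_mul a.1 a.2 h1)
      have h3 : Bnd (c • A) (c * 1) := Bnd_smul hc0 (Bnd_Amat a.1 a.2)
      have := Bnd_sub (Bnd_sub h1 h2) h3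
      refine Bnd_mono this ?_
      have h4 : (1:ℝ) ≤ 4 ^ l.length := one_le_pow₀ (by norm_num)
      have h5 : (0:ℝ) ≤ 4 ^ l.length := by positivity
      simp only [List.length_cons, pow_succ]
      nlinarith [mul_le_mul_of_nonneg_right (mul_le_of_le_one_left hc0 hc1) h5,
        mul_le_mul_of_nonneg_left h4 hc0]

lemma Bnd_prod_key {c : ℝ} (hc0 : 0 ≤ c) (hc1 : c ≤ 1) :
    ∀ l : List (Fin n × Fin n),
      Bnd ((l.map fun p => 1 - c • Amat p.1 p.2).prod
          - (1 - c • (l.map fun p => Amat p.1 p.2).sum))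
        (c ^ 2 * (2 * l.length * 4 ^ l.length)) := by
  intro l
  induction l with
  | nil => intro i j; simp
  | cons a l ih =>
      set G := (l.map fun p => 1 - c • Amat p.1 p.2).prod with hG
      set A := Amat a.1 a.2 with hA
      set S := (l.map fun p => Amat p.1 p.2).sum with hS
      have key : ((a :: l).map fun p => 1 - c • Amat p.1 p.2).prod
          - (1 - c • ((a :: l).map fun p => Amat p.1 p.2).sum)
          = (G - (1 - c • S)) - c • (A * (G - 1)) := by
        simp only [List.map_cons, List.prod_cons, List.sum_cons, ← hG, ← hA, ← hS]
        rw [sub_mul, one_mul, Matrix.smul_mul, mul_sub, mul_one, smul_sub, smul_add]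
        abel
      rw [key]
      have h1 : Bnd (G - (1 - c • S)) (c ^ 2 * (2 * l.length * 4 ^ l.length)) := ih
      have h2 : Bnd (c • (A * (G - 1))) (c * (2 * (c * 4 ^ l.length))) :=
        Bnd_smul hc0 (Bnd_Amat_mul a.1 a.2 (Bnd_prod_sub_one hc0 hc1 l))
      have := Bnd_sub h1 h2
      refine Bnd_mono this ?_
      have h4 : (1:ℝ) ≤ 4 ^ l.length := one_le_pow₀ (by norm_num)
      have h5 : (0:ℝ) ≤ 4 ^ l.length := by positivity
      simp only [List.length_cons, pow_succ]
      push_cast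
      have h6 : (0:ℝ) ≤ c^2 * 4 ^ l.length * ((l.length : ℝ) + 1) := by positivity
      nlinarith [h6]

lemma DS_pinch {s t : Fin n} (hst : s ≠ t) {c : ℝ} (hc0 : 0 ≤ c) (hc1 : c ≤ 1) :
    DS (1 - c • Amat s t) := by
  refine ⟨fun i j => ?_, fun i => ?_, fun j => ?_⟩
  · simp only [Matrix.sub_apply, Matrix.smul_apply, Matrix.one_apply, Amat,
      Matrix.of_apply, smul_eq_mul]
    by_cases his : i = s <;> by_cases hit : i = t <;> by_cases hjs : j = s <;>
      by_cases hjt : j = t <;> simp_all <;>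
      first
      | linarith
      | (split_ifs <;> norm_num)
  · simp only [Matrix.sub_apply, Matrix.smul_apply, Matrix.one_apply, Amat,
      Matrix.of_apply, smul_eq_mul, Finset.sum_sub_distrib]
    rw [show (∑ x : Fin n, if i = x then (1:ℝ) else 0) = 1 by simp]
    have : ∑ j, c * (((if i = s then (1:ℝ) else 0) - if i = t then 1 else 0) *
        ((if j = s then (1:ℝ) else 0) - if j = t then 1 else 0)) = 0 := by
      rw [← Finset.mul_sum, ← Finset.mul_sum]
      have : ∑ j, ((if j = s then (1:ℝ) else 0) - if j = t then 1 else 0) = 0 := by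
        simp [Finset.sum_sub_distrib]
      rw [this, mul_zero, mul_zero]
    rw [this]
    simp
  · simp only [Matrix.sub_apply, Matrix.smul_apply, Matrix.one_apply, Amat,
      Matrix.of_apply, smul_eq_mul, Finset.sum_sub_distrib]
    rw [show (∑ x : Fin n, if x = j then (1:ℝ) else 0) = 1 by simp]
    have : ∑ i, c * (((if i = s then (1:ℝ) else 0) - if i = t then 1 else 0) *
        ((if j = s then (1:ℝ) else 0) - if j = t then 1 else 0)) = 0 := by
      have h0 : ∑ i, ((if i = s then (1:ℝ) else 0) - if i = t then 1 else 0) = 0 := by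
        simp [Finset.sum_sub_distrib]
      calc ∑ i, c * (((if i = s then (1:ℝ) else 0) - if i = t then 1 else 0) *
            ((if j = s then (1:ℝ) else 0) - if j = t then 1 else 0))
          = (∑ i, ((if i = s then (1:ℝ) else 0) - if i = t then 1 else 0)) *
            (c * ((if j = s then (1:ℝ) else 0) - if j = t then 1 else 0)) := by
            rw [Finset.sum_mul]; exact Finset.sum_congr rfl fun i _ => by ring
        _ = 0 := by rw [h0, zero_mul]
    rw [this]
    simp

lemma sum_full_Amat (i j : Fin n) :
    ∑ p ∈ (Finset.univ ×ˢ Finset.univ : Finset (Fin n × Fin n)), Amat p.1 p.2 i j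
      = 2 * n * (if i = j then (1:ℝ) else 0) - 2 := by
  rw [Finset.sum_product]
  simp only [Amat, Matrix.of_apply]
  have step : ∀ s : Fin n, ∑ t : Fin n,
      ((if i = s then (1:ℝ) else 0) - (if i = t then 1 else 0)) *
      ((if j = s then (1:ℝ) else 0) - (if j = t then 1 else 0))
      = n * ((if i = s then (1:ℝ) else 0) * (if j = s then 1 else 0))
        - (if i = s then (1:ℝ) else 0) - (if j = s then (1:ℝ) else 0)
        + (if i = j then 1 else 0) := by
    intro s
    have expand : ∀ t : Fin n,
        ((if i = s then (1:ℝ) else 0) - (if i = t then 1 else 0)) *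
        ((if j = s then (1:ℝ) else 0) - (if j = t then 1 else 0))
        = (if i = s then (1:ℝ) else 0) * (if j = s then 1 else 0)
          - (if i = s then (1:ℝ) else 0) * (if j = t then 1 else 0)
          - (if i = t then (1:ℝ) else 0) * (if j = s then 1 else 0)
          + (if i = t then (1:ℝ) else 0) * (if j = t then 1 else 0) := fun t => by ring
    rw [Finset.sum_congr rfl fun t _ => expand t]
    rw [Finset.sum_add_distrib, Finset.sum_sub_distrib, Finset.sum_sub_distrib]
    rw [Finset.sum_const, ← Finset.mul_sum, ← Finset.sum_mul]
    have e1 : ∑ t : Fin n, (if j = t then (1:ℝ) else 0) = 1 := by simp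
    have e2 : ∑ t : Fin n, (if i = t then (1:ℝ) else 0) = 1 := by simp
    have e3 : ∑ t : Fin n, (if i = t then (1:ℝ) else 0) * (if j = t then 1 else 0)
        = (if i = j then (1:ℝ) else 0) := by
      simp [ite_and, mul_ite, mul_one, mul_zero]
    rw [e1, e2, e3]
    simp [card_univ, mul_comm]
  rw [Finset.sum_congr rfl fun s _ => step s]
  rw [Finset.sum_add_distrib, Finset.sum_sub_distrib, Finset.sum_sub_distrib]
  have e1 : ∑ s : Fin n, (if i = s then (1:ℝ) else 0) = 1 := by simp
  have e2 : ∑ s : Fin n, (if j = s then (1:ℝ) else 0) = 1 := by simp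
  have e3 : ∑ s : Fin n, (n:ℝ) * ((if i = s then (1:ℝ) else 0) * (if j = s then 1 else 0))
      = n * (if i = j then (1:ℝ) else 0) := by
    rw [← Finset.mul_sum]
    congr 1
    simp [ite_and, mul_ite, mul_one, mul_zero]
  rw [e1, e2, e3, Finset.sum_const, card_univ]
  simp
  split_ifs <;> ring

lemma sum_offDiag_Amat (i j : Fin n) :
    ∑ p ∈ (Finset.univ : Finset (Fin n)).offDiag, Amat p.1 p.2 i j
      = 2 * n * (if i = j then (1:ℝ) else 0) - 2 := by
  rw [← sum_full_Amat i j]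
  rw [show (Finset.univ : Finset (Fin n)).offDiag = (Finset.univ ×ˢ Finset.univ).filter (fun p : Fin n × Fin n => p.1 ≠ p.2) by ext; simp]
  rw [← Finset.sum_filter_add_sum_filter_not (Finset.univ ×ˢ Finset.univ)
    (fun p : Fin n × Fin n => p.1 ≠ p.2) (fun p => Amat p.1 p.2 i j)]
  have : ∀ p ∈ (Finset.univ ×ˢ Finset.univ : Finset (Fin n × Fin n)).filter
      (fun p => ¬ p.1 ≠ p.2), Amat p.1 p.2 i j = 0 := by
    intro p hp
    rw [Finset.mem_filter] at hp
    have : p.1 = p.2 := not_not.mp hp.2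
    simp [Amat, this]
  rw [Finset.sum_congr rfl this]
  simp

lemma Jmul (hn : 0 < n) : Jmat n * Jmat n = Jmat n := by
  ext i j
  rw [Matrix.mul_apply]
  simp only [Jmat, Matrix.of_apply]
  rw [Finset.sum_const, card_univ, Fintype.card_fin]
  have : (n:ℝ) ≠ 0 := Nat.cast_ne_zero.mpr hn.ne'
  rw [nsmul_eq_mul]
  field_simp

lemma Qidem (hn : 0 < n) :
    (1 - Jmat n) * (1 - Jmat n) = 1 - Jmat n := by
  rw [mul_sub, sub_mul, sub_mul, Jmul hn]
  simp only [mul_one, one_mul]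
  abel

lemma pow_one_sub_smul (hn : 0 < n) (μ : ℝ) (N : ℕ) :
    (1 - μ • (1 - Jmat n)) ^ N = 1 - (1 - (1-μ)^N) • (1 - Jmat n) := by
  induction N with
  | zero => simp
  | succ N ih =>
      rw [pow_succ, ih]
      set Q := 1 - Jmat n with hQ
      have expand : (1 - (1 - (1-μ)^N) • Q) * (1 - μ • Q)
          = 1 - μ • Q - (1 - (1-μ)^N) • Q + ((1 - (1-μ)^N) * μ) • Q := by
        rw [mul_sub, mul_one, Matrix.mul_smul, sub_mul, one_mul, Matrix.smul_mul,
          Qidem hn]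
        module
      rw [expand]
      have : (1 : ℝ) - (1-μ)^(N+1) = μ + (1 - (1-μ)^N) - (1 - (1-μ)^N) * μ := by ring
      rw [this]
      module

lemma DS_y (hn : 0 < n) {μ : ℝ} (hμ0 : 0 ≤ μ) (hμ1 : μ ≤ 1) :
    DS (1 - μ • (1 - Jmat n)) := by
  have hcast : (n:ℝ) ≠ 0 := Nat.cast_ne_zero.mpr hn.ne'
  have entry : ∀ i j : Fin n, (1 - μ • (1 - Jmat n)) i j
      = (if i = j then (1:ℝ) else 0) - μ * ((if i = j then (1:ℝ) else 0) - 1/n) := by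
    intro i j
    simp [Matrix.sub_apply, Matrix.smul_apply, Matrix.one_apply, Jmat, smul_eq_mul]
  refine ⟨fun i j => ?_, fun i => ?_, fun j => ?_⟩
  · rw [entry]
    have h1 : 0 ≤ μ / n := div_nonneg hμ0 (Nat.cast_nonneg n)
    split_ifs with h
    · have h2 : μ * (1 - 1/n) ≤ 1 := by
        have : (1:ℝ) - 1/n ≤ 1 := by
          have : (0:ℝ) ≤ 1/n := by positivity
          linarith
        nlinarith
      linarith [h2]
    · have : μ * (0 - 1/n) = -(μ/n) := by ring
      rw [this]
      linarith
  · rw [Finset.sum_congr rfl fun j _ => entry i j]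
    rw [Finset.sum_sub_distrib]
    rw [show (∑ j : Fin n, if i = j then (1:ℝ) else 0) = 1 by simp]
    rw [← Finset.mul_sum, Finset.sum_sub_distrib]
    rw [show (∑ j : Fin n, if i = j then (1:ℝ) else 0) = 1 by simp]
    rw [Finset.sum_const, card_univ, Fintype.card_fin]
    rw [nsmul_eq_mul]
    field_simp
    ring
  · rw [Finset.sum_congr rfl fun i _ => entry i j]
    rw [Finset.sum_sub_distrib]
    rw [show (∑ i : Fin n, if i = j then (1:ℝ) else 0) = 1 by simp]
    rw [← Finset.mul_sum, Finset.sum_sub_distrib]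
    rw [show (∑ i : Fin n, if i = j then (1:ℝ) else 0) = 1 by simp]
    rw [Finset.sum_const, card_univ, Fintype.card_fin]
    rw [nsmul_eq_mul]
    field_simp
    ring

lemma main (hn : 0 < n) {α : ℝ} (hα0 : 0 < α) (hα1 : α ≤ 1) :
    α • (1 : Matrix (Fin n) (Fin n) ℝ) + (1 - α) • Jmat n
      ∈ closure (PinchingProducts n) := by
  classical
  set T : Matrix (Fin n) (Fin n) ℝ := α • 1 + (1 - α) • Jmat n with hT
  set ps : List (Fin n × Fin n) := (Finset.univ : Finset (Fin n)).offDiag.toList with hps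
  set K : ℝ := 2 * ps.length * 4 ^ ps.length with hK
  have hK0 : 0 ≤ K := by positivity
  have h2n : (1:ℝ) ≤ 2 * n := by
    have : (1:ℝ) ≤ (n:ℝ) := by exact_mod_cast hn
    linarith
  have h2n0 : (0:ℝ) < 2 * n := by linarith
  set μ : ℕ → ℝ := fun N => 1 - α ^ ((N:ℝ)⁻¹) with hμ
  set c : ℕ → ℝ := fun N => μ N / (2 * n) with hc
  have hα' : ∀ N : ℕ, 0 ≤ α ^ ((N:ℝ)⁻¹) := fun N => Real.rpow_nonneg hα0.le _
  have hα'' : ∀ N : ℕ, α ^ ((N:ℝ)⁻¹) ≤ 1 := fun N =>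
    Real.rpow_le_one hα0.le hα1 (by positivity)
  have hμ0 : ∀ N, 0 ≤ μ N := fun N => by simp only [hμ]; linarith [hα'' N]
  have hμ1 : ∀ N, μ N ≤ 1 := fun N => by simp only [hμ]; linarith [hα' N]
  have hc0 : ∀ N, 0 ≤ c N := fun N => div_nonneg (hμ0 N) h2n0.le
  have hcμ : ∀ N, c N ≤ μ N := fun N => div_le_self (hμ0 N) h2n
  have hc1 : ∀ N, c N ≤ 1 := fun N => le_trans (hcμ N) (hμ1 N)
  set x : ℕ → Matrix (Fin n) (Fin n) ℝ :=
    fun N => ((ps.map fun p => 1 - c N • Amat p.1 p.2)).prod with hx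
  set f : ℕ → Matrix (Fin n) (Fin n) ℝ := fun N => x N ^ N with hf
  set y : ℕ → Matrix (Fin n) (Fin n) ℝ := fun N => 1 - μ N • (1 - Jmat n) with hy
  -- membership
  have hmem : ∀ N, f N ∈ PinchingProducts n := by
    intro N
    refine ⟨(List.replicate N (ps.map fun p => 1 - c N • Amat p.1 p.2)).flatten, ?_, ?_⟩
    · intro P hP
      rw [List.mem_flatten] at hP
      obtain ⟨l', hl', hPl⟩ := hP
      rw [List.eq_of_mem_replicate hl'] at hPl
      rw [List.mem_map] at hPl
      obtain ⟨p, hp, rfl⟩ := hPl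
      have hpod : p ∈ (Finset.univ : Finset (Fin n)).offDiag := by
        rwa [hps, Finset.mem_toList] at hp
      have hne : p.1 ≠ p.2 := (Finset.mem_offDiag.mp hpod).2.2
      rcases lt_or_gt_of_ne hne with h | h
      · exact isPinching_pinch p.1 p.2 h (c N) ⟨hc0 N, hc1 N⟩
      · rw [Amat_symm]
        exact isPinching_pinch p.2 p.1 h (c N) ⟨hc0 N, hc1 N⟩
    · rw [List.prod_flatten, List.map_replicate, List.prod_replicate]
  -- the comparison matrix
  have hS : ∀ N, (1 : Matrix (Fin n) (Fin n) ℝ)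
      - c N • (ps.map fun p => Amat p.1 p.2).sum = y N := by
    intro N
    have hlist : (ps.map fun p => Amat p.1 p.2).sum
        = ∑ p ∈ (Finset.univ : Finset (Fin n)).offDiag, Amat p.1 p.2 :=
      Finset.sum_map_toList _ _
    rw [hlist]
    ext i j
    have hsum := sum_offDiag_Amat (n := n) i j
    simp only [Matrix.sub_apply, Matrix.smul_apply, Matrix.one_apply, smul_eq_mul, hy,
      Matrix.sum_apply, Jmat, Matrix.of_apply]
    rw [hsum]
    have hncast : (n:ℝ) ≠ 0 := Nat.cast_ne_zero.mpr hn.ne'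
    simp only [hc]
    field_simp
  have hbxy : ∀ N, Bnd (x N - y N) ((c N)^2 * K) := by
    intro N
    have := Bnd_prod_key (hc0 N) (hc1 N) ps
    rw [hS N] at this
    exact this
  have hDSx : ∀ N, DS (x N) := by
    intro N
    refine DS_list_prod fun M hM => ?_
    rw [List.mem_map] at hM
    obtain ⟨p, hp, rfl⟩ := hM
    have hpod : p ∈ (Finset.univ : Finset (Fin n)).offDiag := by
      rwa [hps, Finset.mem_toList] at hp
    exact DS_pinch (Finset.mem_offDiag.mp hpod).2.2 (hc0 N) (hc1 N)
  have hpow : ∀ N, Bnd (f N - y N ^ N) (N * ((c N)^2 * K)) := fun N =>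
    Bnd_pow_sub_pow (hDSx N) (DS_y hn (hμ0 N) (hμ1 N)) (hbxy N) N
  have hyN : ∀ N : ℕ, 1 ≤ N → y N ^ N = T := by
    intro N hN
    rw [hy]
    rw [pow_one_sub_smul hn]
    have hNne : ((N:ℝ)) ≠ 0 := Nat.cast_ne_zero.mpr (by omega)
    have h1μ : (1 - μ N) = α ^ ((N:ℝ)⁻¹) := by simp [hμ]
    have hμpow : (1 - μ N)^N = α := by
      rw [h1μ, ← Real.rpow_natCast (α ^ ((N:ℝ)⁻¹)) N, ← Real.rpow_mul hα0.le,
        inv_mul_cancel₀ hNne, Real.rpow_one]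
    rw [hμpow, hT]
    module
  -- quantitative bound
  set L : ℝ := -Real.log α with hL
  have hL0 : 0 ≤ L := by
    simp only [hL]
    linarith [Real.log_nonpos hα0.le hα1]
  have hμle : ∀ N : ℕ, 1 ≤ N → μ N ≤ L / N := by
    intro N hN
    have hNpos : (0:ℝ) < N := by exact_mod_cast hN
    have hdef : α ^ ((N:ℝ)⁻¹) = Real.exp (Real.log α * (N:ℝ)⁻¹) :=
      Real.rpow_def_of_pos hα0 _
    have hexp := Real.add_one_le_exp (Real.log α * (N:ℝ)⁻¹)
    rw [← hdef] at hexp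
    have : L / N = -(Real.log α * (N:ℝ)⁻¹) := by
      rw [hL, div_eq_mul_inv]; ring
    rw [this]
    simp only [hμ]
    linarith
  have hcle : ∀ N : ℕ, 1 ≤ N → c N ≤ L / N := fun N hN =>
    le_trans (hcμ N) (hμle N hN)
  have hfinal : ∀ (N : ℕ), 1 ≤ N → ∀ i j, |(f N - T) i j| ≤ L^2 * K / N := by
    intro N hN i j
    have hNpos : (0:ℝ) < N := by exact_mod_cast hN
    have h1 : |(f N - T) i j| ≤ N * ((c N)^2 * K) := by
      have := hpow N
      rw [hyN N hN] at this
      exact this i j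
    have h2 : (c N)^2 ≤ (L / N)^2 := by
      apply pow_le_pow_left₀ (hc0 N) (hcle N hN)
    have h3 : (N:ℝ) * ((c N)^2 * K) ≤ N * ((L/N)^2 * K) := by
      apply mul_le_mul_of_nonneg_left _ hNpos.le
      exact mul_le_mul_of_nonneg_right h2 hK0
    have h4 : (N:ℝ) * ((L/N)^2 * K) = L^2 * K / N := by
      field_simp
    linarith
  -- convergence
  have htend : Filter.Tendsto f Filter.atTop (nhds T) := by
    refine tendsto_pi_nhds.mpr ?_
    intro i
    rw [tendsto_pi_nhds]
    intro j
    have h0 : Filter.Tendsto (fun N : ℕ => L^2 * K / N) Filter.atTop (nhds 0) :=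
      tendsto_const_div_atTop_nhds_zero_nat _
    have h1 : Filter.Tendsto (fun N => f N i j - T i j) Filter.atTop (nhds 0) := by
      apply squeeze_zero_norm' _ h0
      filter_upwards [Filter.eventually_ge_atTop 1] with N hN
      rw [Real.norm_eq_abs]
      exact hfinal N hN i j
    have := h1.add (tendsto_const_nhds (x := T i j))
    simpa using this
  exact mem_closure_of_tendsto htend (Filter.Eventually.of_forall hmem)

end StmtAux

/-- For every `α ∈ [0,1]`, the matrix `αIₙ + (1−α)Jₙ` (where `Jₙ` has all entries `1/n`)
lies in the closure of `ℙ_n`. -/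
theorem stmt7 {n : ℕ} (α : ℝ) (hα : α ∈ Set.Icc (0 : ℝ) 1) :
    α • (1 : Matrix (Fin n) (Fin n) ℝ) +
        (1 - α) • Matrix.of (fun _ _ => (1 / n : ℝ)) ∈
      closure (PinchingProducts n) := by
  obtain ⟨hα0, hα1⟩ := hα
  rcases Nat.eq_zero_or_pos n with rfl | hn
  · have h1 : (1 : Matrix (Fin 0) (Fin 0) ℝ) ∈ PinchingProducts 0 :=
      ⟨[], by simp, by simp⟩
    refine Set.mem_of_eq_of_mem ?_ (subset_closure h1)
    ext i j
    exact i.elim0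
  rcases eq_or_lt_of_le hα0 with rfl | hαpos
  · -- α = 0 : take the limit of the matrices for α = 1/(k+1)
    set u : ℕ → ℝ := fun k => 1 / (k + 1) with hu
    have hu0 : ∀ k, 0 < u k := fun k => by positivity
    have hu1 : ∀ k, u k ≤ 1 := fun k => by
      rw [hu]
      have : (1:ℝ) ≤ (k:ℝ) + 1 := by
        have : (0:ℝ) ≤ (k:ℝ) := Nat.cast_nonneg k
        linarith
      rw [div_le_one (by positivity)]
      exact this
    have hseq : ∀ k : ℕ, u k • (1 : Matrix (Fin n) (Fin n) ℝ)
        + (1 - u k) • StmtAux.Jmat n ∈ closure (PinchingProducts n) := fun k =>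
      StmtAux.main hn (hu0 k) (hu1 k)
    have hulim : Filter.Tendsto u Filter.atTop (nhds 0) :=
      tendsto_one_div_add_atTop_nhds_zero_nat
    have htend : Filter.Tendsto
        (fun k => u k • (1 : Matrix (Fin n) (Fin n) ℝ) + (1 - u k) • StmtAux.Jmat n)
        Filter.atTop
        (nhds ((0:ℝ) • (1 : Matrix (Fin n) (Fin n) ℝ) + (1 - (0:ℝ)) • StmtAux.Jmat n)) := by
      refine tendsto_pi_nhds.mpr ?_
      intro i
      rw [tendsto_pi_nhds]
      intro j
      have key : ∀ β : ℝ, (β • (1 : Matrix (Fin n) (Fin n) ℝ) + (1 - β) • StmtAux.Jmat n) i j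
          = β * (1 : Matrix (Fin n) (Fin n) ℝ) i j + (1 - β) * StmtAux.Jmat n i j := by
        intro β
        simp [Matrix.add_apply, Matrix.smul_apply, smul_eq_mul]
      simp only [key]
      exact (hulim.mul tendsto_const_nhds).add
        ((tendsto_const_nhds.sub hulim).mul tendsto_const_nhds)
    have := isClosed_closure.mem_of_tendsto htend (Filter.Eventually.of_forall hseq)
    simpa [StmtAux.Jmat] using this
  · have := StmtAux.main hn hαpos hα1
    simpa [StmtAux.Jmat] using this
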